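/- Let A be a complex Banach algebra in which every central quasi-nilpotent element is zero. Suppose n ≥ 3 and φ : A → A is a (nonlinear) Lie n-derivation with φ(0) = 0. If X, Y ∈ A satisfy [X,Y] ∈ Z(A), then [φ(X),Y] + [X,φ(Y)] ∈ Z(A). -/

import Mathlib

/-- The left-nested iterated commutator `p_n(x₁,…,xₙ) = [...[[x₁,x₂],x₃],…,xₙ]`. -/
def pComm11 {A : Type*} [Ring A] : List A → A
  | [] => 0
  | a :: t => t.foldl (fun x y => x * y - y * x) a

set_option linter.unusedSectionVars false

open Filter

section KS
variable {A : Type*} [NormedRing A] [NormedAlgebra ℂ A] [CompleteSpace A]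

/-- Kleinecke–Shirokov (central case): a central commutator is quasinilpotent. -/
theorem ks_central (a b : A) (hc : ∀ g : A, g * (a * b - b * a) = (a * b - b * a) * g) :
    spectralRadius ℂ (a * b - b * a) = 0 := by
  rcases subsingleton_or_nontrivial A with hA | hA
  · exact spectrum.SpectralRadius.of_subsingleton _
  set c := a * b - b * a with hcdef
  set D : A → A := fun x => a * x - x * a with hD
  have hDsmul : ∀ (k : ℕ) (x : A), D (k • x) = k • D x := by
    intro k x
    show a * (k • x) - (k • x) * a = k • (a * x - x * a)
    rw [mul_smul_comm, smul_mul_assoc, smul_sub]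
  have hDitsmul : ∀ (j k : ℕ) (x : A), D^[j] (k • x) = k • D^[j] x := by
    intro j
    induction j with
    | zero => intro k x; simp
    | succ j ih =>
      intro k x
      rw [Function.iterate_succ_apply, hDsmul, ih, ← Function.iterate_succ_apply]
  have hcpow : ∀ (i : ℕ) (g : A), g * c ^ i = c ^ i * g := fun i g => Commute.pow_right (show Commute g c from hc g) i
  -- D (b^(k+1)) = (k+1) • (b^k * c)
  have hDbpow : ∀ k : ℕ, D (b ^ (k + 1)) = (k + 1) • (b ^ k * c) := by
    intro k
    induction k with
    | zero => simp [hD, hcdef]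
    | succ k ih =>
      have expand : D (b ^ (k + 2)) = D (b ^ (k + 1)) * b + b ^ (k + 1) * c := by
        simp only [hD, hcdef, pow_succ]
        noncomm_ring
      rw [expand, ih, smul_mul_assoc, mul_assoc, ← hc b, ← mul_assoc, ← pow_succ]
      rw [succ_nsmul (b ^ (k + 1) * c) (k + 1)]
  have hDbpow' : ∀ k : ℕ, D (b ^ k) = k • (b ^ (k - 1) * c) := by
    rintro (_ | k)
    · simp [hD]
    · simpa using hDbpow k
  have hDmulcpow : ∀ (x : A) (i : ℕ), D (x * c ^ i) = D x * c ^ i := by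
    intro x i
    simp only [hD, ← mul_assoc, sub_mul]
    rw [mul_assoc x (c ^ i) a, ← hcpow i a, ← mul_assoc]
  -- main identity
  have key : ∀ (j k i : ℕ), D^[j] (b ^ k * c ^ i) =
      (k.descFactorial j) • (b ^ (k - j) * c ^ (i + j)) := by
    intro j
    induction j with
    | zero => intro k i; simp
    | succ j ih =>
      intro k i
      rw [Function.iterate_succ_apply, hDmulcpow, hDbpow', smul_mul_assoc, mul_assoc,
        ← pow_succ', hDitsmul, ih, smul_smul]
      rcases k with _ | k
      · simp
      · have e1 : k + 1 - 1 - j = k + 1 - (j + 1) := by omega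
        have e2 : i + 1 + j = i + (j + 1) := by omega
        rw [e1, e2, Nat.succ_descFactorial_succ]
        norm_num
  have keyn : ∀ m : ℕ, D^[m] (b ^ m) = m.factorial • c ^ m := by
    intro m
    have := key m m 0
    simpa [Nat.descFactorial_self] using this
  -- norm bound on iterates of D
  have hDnorm : ∀ x : A, ‖D x‖ ≤ 2 * ‖a‖ * ‖x‖ := by
    intro x
    calc ‖a * x - x * a‖ ≤ ‖a * x‖ + ‖x * a‖ := norm_sub_le _ _
      _ ≤ ‖a‖ * ‖x‖ + ‖x‖ * ‖a‖ := add_le_add (norm_mul_le _ _) (norm_mul_le _ _)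
      _ = 2 * ‖a‖ * ‖x‖ := by ring
  have hDit : ∀ (m : ℕ) (x : A), ‖D^[m] x‖ ≤ (2 * ‖a‖) ^ m * ‖x‖ := by
    intro m
    induction m with
    | zero => intro x; simp
    | succ m ih =>
      intro x
      calc ‖D^[m + 1] x‖ = ‖D^[m] (D x)‖ := by rw [Function.iterate_succ_apply]
        _ ≤ (2 * ‖a‖) ^ m * ‖D x‖ := ih _
        _ ≤ (2 * ‖a‖) ^ m * (2 * ‖a‖ * ‖x‖) := by
            apply mul_le_mul_of_nonneg_left (hDnorm x) (by positivity)
        _ = (2 * ‖a‖) ^ (m + 1) * ‖x‖ := by ring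
  -- ‖cⁿ‖ bound: n! ‖cⁿ‖ ≤ (2‖a‖‖b‖)ⁿ  for n ≥ 1
  have hcn : ∀ m : ℕ, 1 ≤ m → (m.factorial : ℝ) * ‖c ^ m‖ ≤ (2 * ‖a‖ * ‖b‖) ^ m := by
    intro m hm
    have h1 : ‖(m.factorial : ℕ) • c ^ m‖ = (m.factorial : ℝ) * ‖c ^ m‖ := by
      rw [← Nat.cast_smul_eq_nsmul ℝ, norm_smul]
      simp
    calc (m.factorial : ℝ) * ‖c ^ m‖ = ‖D^[m] (b ^ m)‖ := by rw [keyn, h1]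
      _ ≤ (2 * ‖a‖) ^ m * ‖b ^ m‖ := hDit m _
      _ ≤ (2 * ‖a‖) ^ m * ‖b‖ ^ m := by
          apply mul_le_mul_of_nonneg_left (norm_pow_le' b hm) (by positivity)
      _ = (2 * ‖a‖ * ‖b‖) ^ m := by rw [mul_pow]; ring
  -- spectrum is {0}
  have hspec : ∀ k : ℂ, k ∈ spectrum ℂ c → k = 0 := by
    intro k hk
    by_contra hk0
    have hkpos : (0 : ℝ) < ‖k‖ := norm_pos_iff.mpr hk0
    have h1pos : (0 : ℝ) < ‖(1 : A)‖ := norm_pos_iff.mpr one_ne_zero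
    set M : ℝ := 2 * ‖a‖ * ‖b‖ with hM
    have hbound : ∀ m : ℕ, 1 ≤ m →
        (m.factorial : ℝ) * ‖k‖ ^ m ≤ M ^ m * ‖(1 : A)‖ := by
      intro m hm
      have hmem : k ^ m ∈ spectrum ℂ (c ^ m) :=
        spectrum.pow_image_subset c m ⟨k, hk, rfl⟩
      have h2 : ‖k ^ m‖ ≤ ‖c ^ m‖ * ‖(1 : A)‖ := spectrum.norm_le_norm_mul_of_mem hmem
      rw [norm_pow] at h2
      calc (m.factorial : ℝ) * ‖k‖ ^ m ≤ (m.factorial : ℝ) * (‖c ^ m‖ * ‖(1 : A)‖) := by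
            apply mul_le_mul_of_nonneg_left h2 (by positivity)
        _ = ((m.factorial : ℝ) * ‖c ^ m‖) * ‖(1 : A)‖ := by ring
        _ ≤ M ^ m * ‖(1 : A)‖ := by
            apply mul_le_mul_of_nonneg_right (hcn m hm) h1pos.le
    have htend : Tendsto (fun m : ℕ => (M / ‖k‖) ^ m / (m.factorial : ℝ)) atTop (nhds 0) :=
      FloorSemiring.tendsto_pow_div_factorial_atTop (M / ‖k‖)
    have hev : ∀ᶠ m : ℕ in atTop, (M / ‖k‖) ^ m / (m.factorial : ℝ) < 1 / ‖(1 : A)‖ :=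
      htend.eventually (gt_mem_nhds (by positivity))
    obtain ⟨m, hm1, hmlt⟩ := ((eventually_ge_atTop 1).and hev).exists
    have hfac : (0 : ℝ) < (m.factorial : ℝ) := by positivity
    have := hbound m hm1
    rw [div_pow, div_div, div_lt_div_iff₀ (by positivity) h1pos, one_mul] at hmlt
    have : M ^ m * ‖(1 : A)‖ < (m.factorial : ℝ) * ‖k‖ ^ m := by
      calc M ^ m * ‖(1 : A)‖ < ‖k‖ ^ m * (m.factorial : ℝ) := hmlt
        _ = (m.factorial : ℝ) * ‖k‖ ^ m := by ring
    linarith [hbound m hm1]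
  -- conclude
  refine le_antisymm ?_ zero_le
  rw [spectralRadius]
  refine iSup₂_le fun k hk => ?_
  rw [hspec k hk]
  simp
end KS


section Fold
variable {A : Type*} [Ring A]

private def brkt (x y : A) : A := x * y - y * x

lemma foldl_brkt_zero : ∀ t : List A, t.foldl brkt 0 = 0 := by
  intro t
  induction t with
  | nil => rfl
  | cons b t ih => simp only [List.foldl_cons, brkt, zero_mul, mul_zero, sub_zero, zero_sub,
      neg_zero, sub_self, ih]

lemma foldl_brkt_add (t : List A) : ∀ a b : A,
    t.foldl brkt (a + b) = t.foldl brkt a + t.foldl brkt b := by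
  induction t with
  | nil => intro a b; rfl
  | cons u t ih =>
    intro a b
    simp only [List.foldl_cons]
    have : brkt (a + b) u = brkt a u + brkt b u := by simp only [brkt]; noncomm_ring
    rw [this, ih]

lemma foldl_brkt_central {c : A} (hc : ∀ g : A, g * c = c * g) :
    ∀ t : List A, t ≠ [] → t.foldl brkt c = 0 := by
  rintro (_ | ⟨b, t⟩) ht
  · exact absurd rfl ht
  · simp only [List.foldl_cons]
    have : brkt c b = 0 := by rw [brkt, hc b, sub_self]
    rw [this, foldl_brkt_zero]

lemma pComm11_eq (a : A) (t : List A) : pComm11 (a :: t) = t.foldl brkt a := rfl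

lemma ofFn_update {n : ℕ} (x : Fin n → A) (i : Fin n) (v : A) :
    List.ofFn (Function.update x i v) = (List.ofFn x).set i v := by
  apply List.ext_getElem
  · simp
  · intro j h1 h2
    simp only [List.getElem_ofFn, List.getElem_set, Function.update_apply]
    simp [Fin.ext_iff, eq_comm]

lemma ofFn_get_cast {n : ℕ} (L : List A) (h : L.length = n) :
    List.ofFn (fun i : Fin n => L.get (Fin.cast h.symm i)) = L := by
  subst h
  simp [List.ofFn_get]

end Fold

/-- In a complex Banach algebra in which every central quasi-nilpotent element is zero,
a nonlinear Lie `n`-derivation `φ` (`n ≥ 3`, `φ 0 = 0`) satisfies: if `[X,Y]` is central,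
then `[φ X, Y] + [X, φ Y]` is central. -/
theorem stmt11 {A : Type*} [NormedRing A] [NormedAlgebra ℂ A] [CompleteSpace A]
    (hcq : ∀ z : A, z ∈ Set.center A → spectralRadius ℂ z = 0 → z = 0)
    (n : ℕ) (hn : 3 ≤ n) (φ : A → A) (hφ0 : φ 0 = 0)
    (hφ : ∀ x : Fin n → A,
      φ (pComm11 (List.ofFn x))
        = ∑ i, pComm11 (List.ofFn (Function.update x i (φ (x i)))))
    (X Y : A) (hXY : X * Y - Y * X ∈ Set.center A) :
    (φ X * Y - Y * φ X) + (X * φ Y - φ Y * X) ∈ Set.center A := by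
  obtain ⟨m, rfl⟩ : ∃ m, n = m + 3 := ⟨n - 3, by omega⟩
  have hXYc : ∀ g : A, g * (X * Y - Y * X) = (X * Y - Y * X) * g := fun g =>
    ((Set.mem_center_iff.mp hXY).comm g).symm
  set W : A := (φ X * Y - Y * φ X) + (X * φ Y - φ Y * X) with hW
  have key : ∀ l : List A, l.length = m + 1 → l.foldl brkt W = 0 := by
    intro l hl
    have hlne : l ≠ [] := by
      intro h; rw [h] at hl; simp at hl
    set L : List A := X :: Y :: l with hLdef
    have hL : L.length = m + 3 := by simp [hLdef, hl]
    set x : Fin (m + 3) → A := fun i => L.get (Fin.cast hL.symm i) with hx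
    have hofn : List.ofFn x = L := ofFn_get_cast L hL
    have hmain := hφ x
    rw [hofn] at hmain
    have hlhs : pComm11 L = 0 := by
      rw [hLdef, pComm11_eq, List.foldl_cons]
      exact foldl_brkt_central hXYc l hlne
    simp only [ofFn_update, hofn] at hmain
    rw [hlhs, hφ0, Fin.sum_univ_succ, Fin.sum_univ_succ] at hmain
    have e2 : ∀ i : Fin (m + 1),
        pComm11 (L.set (↑(i.succ.succ)) (φ (x i.succ.succ))) = 0 := by
      intro i
      have hv : ((i.succ.succ : Fin (m + 3)) : ℕ) = (i : ℕ) + 1 + 1 := rfl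
      rw [hv, hLdef]
      show pComm11 (X :: Y :: l.set (↑i) (φ (x i.succ.succ))) = 0
      rw [pComm11_eq, List.foldl_cons]
      apply foldl_brkt_central hXYc
      intro hnil
      have := congrArg List.length hnil
      rw [List.length_set, hl] at this
      simp at this
    have hsum0 : ∑ i : Fin (m + 1),
        pComm11 (L.set (↑(i.succ.succ)) (φ (x i.succ.succ))) = 0 :=
      Finset.sum_eq_zero fun i _ => e2 i
    rw [hsum0, add_zero] at hmain
    have e0 : pComm11 (L.set (↑(0 : Fin (m + 3))) (φ (x 0)))
        = l.foldl brkt (brkt (φ X) Y) := rfl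
    have e1 : pComm11 (L.set (↑(Fin.succ (0 : Fin (m + 2)))) (φ (x (Fin.succ 0))))
        = l.foldl brkt (brkt X (φ Y)) := rfl
    rw [e0, e1] at hmain
    rw [hW]
    have : (φ X * Y - Y * φ X) + (X * φ Y - φ Y * X) = brkt (φ X) Y + brkt X (φ Y) := rfl
    rw [this, foldl_brkt_add, ← hmain]
  have step : ∀ k : ℕ, 1 ≤ k →
      (∀ l : List A, l.length = k + 1 → l.foldl brkt W = 0) →
      ∀ l : List A, l.length = k → l.foldl brkt W = 0 := by
    intro k hk hP l hl
    have hVc : ∀ g : A, g * (l.foldl brkt W) = (l.foldl brkt W) * g := by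
      intro g
      have h := hP (l ++ [g]) (by simp [hl])
      rw [List.foldl_append] at h
      simp only [List.foldl_cons, List.foldl_nil] at h
      exact (sub_eq_zero.mp h).symm
    obtain ⟨l₀, z, rfl⟩ : ∃ l₀ z, l = l₀ ++ [z] := by
      rcases List.eq_nil_or_concat l with h | ⟨l₀, z, h⟩
      · rw [h] at hl; simp at hl; omega
      · exact ⟨l₀, z, by rw [h, List.concat_eq_append]⟩
    rw [List.foldl_append] at hVc ⊢
    simp only [List.foldl_cons, List.foldl_nil] at hVc ⊢
    set U : A := l₀.foldl brkt W with hU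
    exact hcq _ (Semigroup.mem_center_iff.mpr hVc) (ks_central U z hVc)
  have desc : ∀ j : ℕ, j ≤ m → ∀ l : List A, l.length = m + 1 - j →
      l.foldl brkt W = 0 := by
    intro j
    induction j with
    | zero => intro _ l hl; exact key l (by omega)
    | succ j ih =>
      intro hj l hl
      refine step (m + 1 - (j + 1)) (by omega) (fun l' hl' => ih (by omega) l' (by omega)) l hl
  have hWc : ∀ g : A, g * W = W * g := by
    intro g
    have h := desc m le_rfl [g] (by simp)
    simp only [List.foldl_cons, List.foldl_nil] at h
    exact (sub_eq_zero.mp h).symm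
  exact Semigroup.mem_center_iff.mpr hWc
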